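/- Let n' ≥ 3, let T be a spanning tree of the complete graph K_{n'} with edges labeled e_1,…,e_{n'−1}, and let x_{ia}x_{jb} be a generator of I_T with a ≠ b, where the unique path in T from i to j starts with the edge e_a = {i, i'} and ends with the edge e_b = {j', j}. If m is a monomial of degree 2 in S_T such that both x_{i'a}·m ∈ I_T and x_{j'b}·m ∈ I_T, then m ∈ I_T. (This is the key step showing that every first order deformation of a generator of I_T can be pushed to at least one vertex of I_T.) -/

import Mathlib

/-!
Statement 16: Let `T` be a spanning tree of the complete graph on `n' ≥ 3` vertices with
edges `e_1, …, e_{n'-1}`, and let `x_{ia}x_{jb}` be a generator of `I_T` with `a ≠ b`,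
where the unique path in `T` from `i` to `j` starts with the edge `e_a = {i, i'}` and ends
with the edge `e_b = {j', j}` (first/last edges detected by distances in `T`).  If `m` is
a degree-2 monomial of `S_T` with `x_{i'a}·m ∈ I_T` and `x_{j'b}·m ∈ I_T`, then `m ∈ I_T`.
-/

set_option synthInstance.maxHeartbeats 800000
set_option maxHeartbeats 1600000

open MvPolynomial

noncomputable section

/-- The variables `x_{ia}` of `S_T`: pairs of a vertex `i` and a (labelled) edge `e_a`
incident to it. -/
def TreeVar (n' : ℕ) (edges : Fin (n' - 1) → Sym2 (Fin n')) : Type :=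
  {p : Fin n' × Fin (n' - 1) // p.1 ∈ edges p.2}

/-- The polarization `I_T ⊆ S_T` attached to a (labelled) spanning tree `T`:
it is generated by the monomials `x_{ia}·x_{jb}` for the pairs of distinct vertices `i, j`
such that the unique path in `T` from `i` to `j` starts with the edge `e_a` and ends with
the edge `e_b` (first/last edges being detected by distances in `T`). -/
def TreeIdeal (k : Type) [Field k] (n' : ℕ) (T : SimpleGraph (Fin n'))
    (edges : Fin (n' - 1) → Sym2 (Fin n')) :
    Ideal (MvPolynomial (TreeVar n' edges) k) :=
  Ideal.span {f | ∃ (i j : Fin n') (a b : Fin (n' - 1))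
    (hia : i ∈ edges a) (hjb : j ∈ edges b),
    i ≠ j ∧
    (∃ i', edges a = s(i, i') ∧ T.dist i' j + 1 = T.dist i j) ∧
    (∃ j', edges b = s(j', j) ∧ T.dist i j' + 1 = T.dist i j) ∧
    f = X (⟨(i, a), hia⟩ : TreeVar n' edges) * X (⟨(j, b), hjb⟩ : TreeVar n' edges)}

/-- `f` is a monomial (with coefficient `1`). -/
def IsMonomial (k : Type) [Field k] (σ : Type) (f : MvPolynomial σ k) : Prop :=
  ∃ u : σ →₀ ℕ, f = monomial u 1

section TreeLemmas

open SimpleGraph Walk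

variable {V : Type*} [DecidableEq V] {G : SimpleGraph V}

omit [DecidableEq V] in
/-- In a tree, every path has length equal to the distance between its endpoints. -/
lemma tree_path_len (hT : G.IsTree) {x y : V} {p : G.Walk x y} (hp : p.IsPath) :
    p.length = G.dist x y := by
  obtain ⟨q, hq, hql⟩ := hT.isConnected.exists_path_of_dist x y
  have := (hT.existsUnique_path x y).unique hp hq
  rw [this, hql]

lemma geodesic_point (hG : G.Connected) {x y z : V} {p : G.Walk x y}
    (hl : p.length = G.dist x y) (hz : z ∈ p.support) :
    G.dist x z + G.dist z y = G.dist x y := by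
  have h1 : G.dist x z ≤ (p.takeUntil z hz).length := dist_le _
  have h2 : G.dist z y ≤ (p.dropUntil z hz).length := dist_le _
  have h3 : (p.takeUntil z hz).length + (p.dropUntil z hz).length = p.length := by
    rw [← Walk.length_append, Walk.take_spec]
  have htri := hG.dist_triangle (u := x) (v := z) (w := y)
  omega

lemma tree_dist_ne (hT : G.IsTree) {x x' : V} (h : G.Adj x x') (z : V) :
    G.dist z x ≠ G.dist z x' := by
  intro he
  obtain ⟨p, hp, hl⟩ := hT.isConnected.exists_path_of_dist z x
  by_cases hx' : x' ∈ p.support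
  · have hgp := geodesic_point hT.isConnected hl hx'
    have h1 : G.dist x' x = 1 := dist_eq_one_iff_adj.mpr h.symm
    omega
  · have hP' : (p.concat h).IsPath := by
      rw [Walk.isPath_def, Walk.support_concat]
      rw [List.nodup_append]
      refine ⟨hp.support_nodup, List.nodup_singleton _, ?_⟩
      intro u hu v hv huv
      simp only [List.mem_singleton] at hv
      rw [hv] at huv
      exact hx' (huv ▸ hu)
    have hlen := tree_path_len hT hP'
    rw [Walk.length_concat] at hlen
    omega

/-- Trichotomy: adjacent vertices in a tree have distances to any vertex differing by one. -/
lemma tree_side (hT : G.IsTree) {x x' : V} (h : G.Adj x x') (z : V) :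
    G.dist z x + 1 = G.dist z x' ∨ G.dist z x' + 1 = G.dist z x := by
  have h1 : G.dist z x' ≤ G.dist z x + G.dist x x' := hT.isConnected.dist_triangle
  have h2 : G.dist z x ≤ G.dist z x' + G.dist x' x := hT.isConnected.dist_triangle
  have h3 : G.dist x x' = 1 := dist_eq_one_iff_adj.mpr h
  have h4 : G.dist x' x = 1 := dist_eq_one_iff_adj.mpr h.symm
  have h5 := tree_dist_ne hT h z
  omega

/-- The crossing lemma: distances across an edge of a tree add up. -/
lemma tree_cross (hT : G.IsTree) {x x' : V} (hxx' : G.Adj x x') {z w : V}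
    (hz : G.dist x z + 1 = G.dist x' z) (hw : G.dist x' w + 1 = G.dist x w) :
    G.dist z w = G.dist z x + 1 + G.dist x' w := by
  obtain ⟨P, hP, hPl⟩ := hT.isConnected.exists_path_of_dist z x
  obtain ⟨Q, hQ, hQl⟩ := hT.isConnected.exists_path_of_dist x' w
  have sideP : ∀ v ∈ P.support, G.dist x v + 1 = G.dist x' v := by
    intro v hv
    have hadd := geodesic_point hT.isConnected hPl hv
    have e1 : G.dist v x = G.dist x v := dist_comm ..
    have e2 : G.dist v x' = G.dist x' v := dist_comm ..
    have e3 : G.dist v z = G.dist z v := dist_comm ..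
    have e4 : G.dist z x = G.dist x z := dist_comm ..
    have htri : G.dist x' z ≤ G.dist x' v + G.dist v z := hT.isConnected.dist_triangle
    rcases tree_side hT hxx' v with hc | hc <;> omega
  have sideQ : ∀ v ∈ Q.support, G.dist x' v + 1 = G.dist x v := by
    intro v hv
    have hadd := geodesic_point hT.isConnected hQl hv
    have e1 : G.dist v x = G.dist x v := dist_comm ..
    have e2 : G.dist v x' = G.dist x' v := dist_comm ..
    have htri : G.dist x w ≤ G.dist x v + G.dist v w := hT.isConnected.dist_triangle
    rcases tree_side hT hxx' v with hc | hc <;> omega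
  have hdisj : ∀ v ∈ P.support, v ∈ Q.support → False := by
    intro v hv hv'
    have := sideP v hv
    have := sideQ v hv'
    omega
  have hR : (P.append (Walk.cons hxx' Q)).IsPath := by
    rw [Walk.isPath_def, Walk.support_append, Walk.support_cons, List.tail_cons,
      List.nodup_append]
    exact ⟨hP.support_nodup, hQ.support_nodup, fun v hv w hw hvw => hdisj v hv (by subst hvw; exact hw)⟩
  have hlen := tree_path_len hT hR
  rw [Walk.length_append, Walk.length_cons] at hlen
  omega

end TreeLemmas

/-- Constructor for `TreeVar` with the right type. -/
def TreeVar.mk' {n' : ℕ} {edges : Fin (n' - 1) → Sym2 (Fin n')} (p : Fin n' × Fin (n' - 1))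
    (h : p.1 ∈ edges p.2) : TreeVar n' edges := ⟨p, h⟩

/-- The exponent vectors of the generators of `TreeIdeal`. -/
def GenExp (n' : ℕ) (T : SimpleGraph (Fin n')) (edges : Fin (n' - 1) → Sym2 (Fin n')) :
    Set (TreeVar n' edges →₀ ℕ) :=
  {e | ∃ (i j : Fin n') (a b : Fin (n' - 1))
    (hia : i ∈ edges a) (hjb : j ∈ edges b),
    i ≠ j ∧
    (∃ i', edges a = s(i, i') ∧ T.dist i' j + 1 = T.dist i j) ∧
    (∃ j', edges b = s(j', j) ∧ T.dist i j' + 1 = T.dist i j) ∧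
    e = Finsupp.single (TreeVar.mk' (i, a) hia) 1 +
        Finsupp.single (TreeVar.mk' (j, b) hjb) 1}

lemma monomial_single_add_single {k : Type} [Field k] {σ : Type} (v w : σ) :
    (monomial (Finsupp.single v 1 + Finsupp.single w 1) (1 : k)) = X v * X w := by
  rw [X, X, monomial_mul, one_mul]

lemma treeIdeal_eq_span (k : Type) [Field k] (n' : ℕ) (T : SimpleGraph (Fin n'))
    (edges : Fin (n' - 1) → Sym2 (Fin n')) :
    TreeIdeal k n' T edges =
      Ideal.span ((fun s => monomial s (1 : k)) '' GenExp n' T edges) := by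
  unfold TreeIdeal
  congr 1
  ext f
  constructor
  · rintro ⟨i, j, a, b, hia, hjb, hne, hfi, hla, rfl⟩
    exact ⟨_, ⟨i, j, a, b, hia, hjb, hne, hfi, hla, rfl⟩, monomial_single_add_single _ _⟩
  · rintro ⟨e, ⟨i, j, a, b, hia, hjb, hne, hfi, hla, rfl⟩, rfl⟩
    exact ⟨i, j, a, b, hia, hjb, hne, hfi, hla, (monomial_single_add_single _ _)⟩

lemma mem_treeIdeal_monomial_iff {k : Type} [Field k] {n' : ℕ} {T : SimpleGraph (Fin n')}
    {edges : Fin (n' - 1) → Sym2 (Fin n')} {μ : TreeVar n' edges →₀ ℕ} :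
    (monomial μ (1 : k)) ∈ TreeIdeal k n' T edges ↔
      ∃ e ∈ GenExp n' T edges, e ≤ μ := by
  rw [treeIdeal_eq_span, mem_ideal_span_monomial_image]
  constructor
  · intro h
    refine h μ ?_
    classical
    rw [support_monomial]
    simp
  · rintro ⟨e, he, hle⟩ xi hxi
    classical
    rw [support_monomial, if_neg one_ne_zero, Finset.mem_singleton] at hxi
    subst hxi
    exact ⟨e, he, hle⟩

lemma finsupp_eq_of_le_of_sum_eq {σ : Type} {f g : σ →₀ ℕ} (h : f ≤ g)
    (hs : f.sum (fun _ n => n) = g.sum (fun _ n => n)) : f = g := by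
  obtain ⟨c, rfl⟩ := le_iff_exists_add.mp h
  have hsum : (f + c).sum (fun _ n => n) = f.sum (fun _ n => n) + c.sum (fun _ n => n) :=
    Finsupp.sum_add_index' (fun _ => rfl) (fun _ _ _ => rfl)
  have hc0 : c.sum (fun _ n => n) = 0 := by omega
  have : c = 0 := by
    ext w
    by_contra hw
    have hmem : w ∈ c.support := Finsupp.mem_support_iff.mpr hw
    have := Finset.sum_eq_zero_iff.mp hc0 w hmem
    exact hw this
  rw [this, add_zero]

/-- The key extraction step: if a generator exponent divides `x_{i'a}·m`, then either it
divides `m`, or it identifies a variable `x_{pc}` of `m` with `p` strictly on the `i`-side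
of the edge `e_a = {i,i'}` and `e_c = {p', p}` pointing from `p` towards `i'`. -/
lemma extract {n' : ℕ} {T : SimpleGraph (Fin n')} {edges : Fin (n' - 1) → Sym2 (Fin n')}
    {i i' : Fin n'} {a : Fin (n' - 1)} (hii' : i ≠ i') (hi'a : i' ∈ edges a)
    (hea : edges a = s(i, i')) {μ e : TreeVar n' edges →₀ ℕ}
    (he : e ∈ GenExp n' T edges)
    (hle : e ≤ (Finsupp.single (TreeVar.mk' (i', a) hi'a) 1 :
      TreeVar n' edges →₀ ℕ) + μ) :
    (e ≤ μ) ∨ ∃ (p : Fin n') (c : Fin (n' - 1)) (hpc : p ∈ edges c),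
      1 ≤ μ (TreeVar.mk' (p, c) hpc) ∧ T.dist i p + 1 = T.dist i' p ∧
      ∃ p', edges c = s(p', p) ∧ T.dist i' p' + 1 = T.dist i' p := by
  classical
  obtain ⟨gi, gj, ga, gb, hgia, hgjb, hgne, ⟨gi', hgea, hgdi⟩, ⟨gj', hgeb, hgdj⟩, rfl⟩ := he
  by_cases hA : i' = gi ∧ a = ga
  · obtain ⟨h1, h2⟩ := hA
    subst h1; subst h2
    have hs : s(i, i') = s(i', gi') := hea.symm.trans hgea
    rw [Sym2.eq_iff] at hs
    have h3 : i = gi' := by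
      rcases hs with ⟨h, _⟩ | ⟨h, _⟩
      · exact absurd h hii'
      · exact h
    subst h3
    refine Or.inr ⟨gj, gb, hgjb, ?_, hgdi, gj', hgeb, hgdj⟩
    have hw := hle (TreeVar.mk' (gj, gb) hgjb)
    have hne1 : (TreeVar.mk' (i', a) hgia) ≠ TreeVar.mk' (gj, gb) hgjb := by
      intro h
      exact hgne (congrArg (fun x => x.1.1) h)
    have hne2 : (TreeVar.mk' (i', a) hi'a) ≠ TreeVar.mk' (gj, gb) hgjb := by
      intro h
      exact hgne (congrArg (fun x => x.1.1) h)
    simp only [Finsupp.add_apply, Finsupp.single_apply, hne1, hne2, if_true, if_false] at hw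
    omega
  · by_cases hB : i' = gj ∧ a = gb
    · obtain ⟨h1, h2⟩ := hB
      subst h1; subst h2
      have hs : s(i, i') = s(gj', i') := hea.symm.trans hgeb
      rw [Sym2.eq_iff] at hs
      have h3 : i = gj' := by
        rcases hs with ⟨h, _⟩ | ⟨h, h'⟩
        · exact h
        · exact absurd h hii'
      subst h3
      have c1 : T.dist gi i = T.dist i gi := SimpleGraph.dist_comm ..
      have c2 : T.dist gi i' = T.dist i' gi := SimpleGraph.dist_comm ..
      have c3 : T.dist gi' i' = T.dist i' gi' := SimpleGraph.dist_comm ..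
      refine Or.inr ⟨gi, ga, hgia, ?_, by omega, gi', hgea.trans Sym2.eq_swap, by omega⟩
      have hw := hle (TreeVar.mk' (gi, ga) hgia)
      have hne1 : (TreeVar.mk' (i', a) hgjb) ≠ TreeVar.mk' (gi, ga) hgia := by
        intro h
        exact hgne (congrArg (fun x => x.1.1) h).symm
      have hne2 : (TreeVar.mk' (i', a) hi'a) ≠ TreeVar.mk' (gi, ga) hgia := by
        intro h
        exact hgne (congrArg (fun x => x.1.1) h).symm
      simp only [Finsupp.add_apply, Finsupp.single_apply, hne1, hne2, if_true, if_false] at hw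
      omega
    · left
      intro w
      have hw := hle w
      have hne : (TreeVar.mk' (i', a) hi'a) ≠ w ∨
          ((TreeVar.mk' (gi, ga) hgia) ≠ w ∧
           (TreeVar.mk' (gj, gb) hgjb) ≠ w) := by
        by_cases ht : (TreeVar.mk' (i', a) hi'a) = w
        · right
          constructor
          · intro h
            have := congrArg Subtype.val (h.trans ht.symm)
            exact hA ⟨(congrArg Prod.fst this).symm, (congrArg Prod.snd this).symm⟩
          · intro h
            have := congrArg Subtype.val (h.trans ht.symm)
            exact hB ⟨(congrArg Prod.fst this).symm, (congrArg Prod.snd this).symm⟩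
        · exact Or.inl ht
      simp only [Finsupp.add_apply, Finsupp.single_apply] at hw ⊢
      rcases hne with h | ⟨h1, h2⟩
      · simp only [h, if_false] at hw
        omega
      · simp only [h1, h2, if_false] at hw ⊢
        omega

theorem statement16 (k : Type) [Field k] (n' : ℕ) (hn : 3 ≤ n')
    (T : SimpleGraph (Fin n')) (hT : T.IsTree)
    (edges : Fin (n' - 1) → Sym2 (Fin n')) (hinj : Function.Injective edges)
    (hrange : Set.range edges = T.edgeSet)
    (i j i' j' : Fin n') (a b : Fin (n' - 1)) (hab : a ≠ b) (hij : i ≠ j)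
    (hia : i ∈ edges a) (hi'a : i' ∈ edges a) (hjb : j ∈ edges b) (hj'b : j' ∈ edges b)
    (hea : edges a = s(i, i')) (heb : edges b = s(j', j))
    (hfirst : T.dist i' j + 1 = T.dist i j) (hlast : T.dist i j' + 1 = T.dist i j)
    (m : MvPolynomial (TreeVar n' edges) k)
    (hm : IsMonomial k (TreeVar n' edges) m) (hmd : m.totalDegree = 2)
    (h1 : (X (⟨(i', a), hi'a⟩ : TreeVar n' edges) : MvPolynomial (TreeVar n' edges) k) * m ∈
      TreeIdeal k n' T edges)
    (h2 : (X (⟨(j', b), hj'b⟩ : TreeVar n' edges) : MvPolynomial (TreeVar n' edges) k) * m ∈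
      TreeIdeal k n' T edges) :
    m ∈ TreeIdeal k n' T edges := by
  classical
  have haE : edges a ∈ T.edgeSet := hrange ▸ Set.mem_range_self a
  have hbE : edges b ∈ T.edgeSet := hrange ▸ Set.mem_range_self b
  have adj_a : T.Adj i i' := by rw [hea] at haE; exact haE
  have adj_b : T.Adj j' j := by rw [heb] at hbE; exact hbE
  have hii' : i ≠ i' := adj_a.ne
  have hjj' : j' ≠ j := adj_b.ne
  obtain ⟨μ, rfl⟩ := hm
  have hμ2 : μ.sum (fun _ n => n) = 2 := by
    rw [totalDegree_monomial _ (one_ne_zero)] at hmd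
    exact hmd
  have hre1 : (X (⟨(i', a), hi'a⟩ : TreeVar n' edges) : MvPolynomial (TreeVar n' edges) k) *
      monomial μ 1 = monomial
        ((Finsupp.single (TreeVar.mk' (i', a) hi'a) 1 : TreeVar n' edges →₀ ℕ)
          + μ) 1 := by
    show monomial (Finsupp.single (TreeVar.mk' (i', a) hi'a) 1) (1 : k) * monomial μ 1 = _
    rw [monomial_mul, one_mul]
  have hre2 : (X (⟨(j', b), hj'b⟩ : TreeVar n' edges) : MvPolynomial (TreeVar n' edges) k) *
      monomial μ 1 = monomial
        ((Finsupp.single (TreeVar.mk' (j', b) hj'b) 1 : TreeVar n' edges →₀ ℕ)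
          + μ) 1 := by
    show monomial (Finsupp.single (TreeVar.mk' (j', b) hj'b) 1) (1 : k) * monomial μ 1 = _
    rw [monomial_mul, one_mul]
  rw [hre1, mem_treeIdeal_monomial_iff] at h1
  rw [hre2, mem_treeIdeal_monomial_iff] at h2
  obtain ⟨e1, he1, hle1⟩ := h1
  obtain ⟨e2, he2, hle2⟩ := h2
  rcases extract hii' hi'a hea he1 hle1 with hdone | ⟨p, c, hpc, hμp, hp1, p₀, hpc0, hp0d⟩
  · exact mem_treeIdeal_monomial_iff.mpr ⟨e1, he1, hdone⟩
  rcases extract hjj'.symm hj'b (heb.trans Sym2.eq_swap) he2 hle2 with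
    hdone | ⟨q, d1, hqd, hμq, hq1, q₀, hqd0, hq0d⟩
  · exact mem_treeIdeal_monomial_iff.mpr ⟨e2, he2, hdone⟩
  -- at this point:
  -- hp1 : T.dist i p + 1 = T.dist i' p, hpc0 : edges c = s(p₀, p),
  -- hp0d : T.dist i' p₀ + 1 = T.dist i' p
  -- hq1 : T.dist j q + 1 = T.dist j' q, hqd0 : edges d1 = s(q₀, q),
  -- hq0d : T.dist j' q₀ + 1 = T.dist j' q
  have hcE : edges c ∈ T.edgeSet := hrange ▸ Set.mem_range_self c
  have hdE : edges d1 ∈ T.edgeSet := hrange ▸ Set.mem_range_self d1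
  have adj_c : T.Adj p₀ p := by rw [hpc0] at hcE; exact hcE
  have adj_d : T.Adj q₀ q := by rw [hqd0] at hdE; exact hdE
  have hd1 : T.dist i i' = 1 := SimpleGraph.dist_eq_one_iff_adj.mpr adj_a
  have hd2 : T.dist j' j = 1 := SimpleGraph.dist_eq_one_iff_adj.mpr adj_b
  -- commutation bookkeeping
  have c1 : T.dist j' i = T.dist i j' := SimpleGraph.dist_comm ..
  have c2 : T.dist j i = T.dist i j := SimpleGraph.dist_comm ..
  have c3 : T.dist j i' = T.dist i' j := SimpleGraph.dist_comm ..
  have c4 : T.dist j' i' = T.dist i' j' := SimpleGraph.dist_comm ..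
  have c5 : T.dist p i = T.dist i p := SimpleGraph.dist_comm ..
  have c6 : T.dist p₀ i = T.dist i p₀ := SimpleGraph.dist_comm ..
  have c7 : T.dist p₀ i' = T.dist i' p₀ := SimpleGraph.dist_comm ..
  have c8 : T.dist q₀ j = T.dist j q₀ := SimpleGraph.dist_comm ..
  have c9 : T.dist q₀ j' = T.dist j' q₀ := SimpleGraph.dist_comm ..
  -- dist i j ≥ 2
  have dij2 : 2 ≤ T.dist i j := by
    have hpos : 0 < T.dist i j := hT.isConnected.pos_dist_of_ne hij
    by_contra hcon
    have hz1 : T.dist i' j = 0 := by omega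
    have hz2 : T.dist i j' = 0 := by omega
    have hi'j : i' = j := hT.isConnected.dist_eq_zero_iff.mp hz1
    have hij' : i = j' := hT.isConnected.dist_eq_zero_iff.mp hz2
    apply hab
    apply hinj
    rw [hea, heb, ← hij', ← hi'j]
  -- S : i' and j' are both interior on the geodesic, dist i' j' = dist i j - 2
  have hS : T.dist i' j' + 1 = T.dist i' j := by
    rcases tree_side hT adj_b i' with h | h
    · exact h
    · exfalso
      have hx := tree_cross hT adj_b (z := i) (w := i') (by omega) (by omega)
      omega
  have hEq1 : T.dist i' q = T.dist i' j' + 1 + T.dist j q :=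
    tree_cross hT adj_b (z := i') (w := q) (by omega) hq1
  have hEq2 : T.dist i q = T.dist i j' + 1 + T.dist j q :=
    tree_cross hT adj_b (z := i) (w := q) (by omega) hq1
  have hSq : T.dist i' q + 1 = T.dist i q := by omega
  have hDpq : T.dist p q = T.dist p i + 1 + T.dist i' q :=
    tree_cross hT adj_a (z := p) (w := q) hp1 hSq
  have hpq : p ≠ q := by
    intro h
    rw [h] at hDpq
    have h0 : T.dist q q = 0 := SimpleGraph.dist_self
    omega
  -- G1
  have hG1 : T.dist p₀ q + 1 = T.dist p q := by
    rcases tree_side hT adj_a p₀ with h | h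
    · -- p₀ on the i-side
      have hx := tree_cross hT adj_a (z := p₀) (w := q) (by omega) hSq
      omega
    · -- degenerate case : p = i, p₀ = i'
      have hone : T.dist p p₀ = 1 := SimpleGraph.dist_eq_one_iff_adj.mpr adj_c.symm
      have hx := tree_cross hT adj_a (z := p) (w := p₀) hp1 (by omega)
      have hpi : p = i := hT.isConnected.dist_eq_zero_iff.mp (by omega)
      have hp0i' : i' = p₀ := hT.isConnected.dist_eq_zero_iff.mp (by omega)
      rw [hpi, ← hp0i']
      exact hSq
  -- G2
  have hG2 : T.dist p q₀ + 1 = T.dist p q := by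
    rcases tree_side hT adj_b q₀ with h | h
    · -- degenerate case : q = j, q₀ = j'
      have hone : T.dist q₀ q = 1 := SimpleGraph.dist_eq_one_iff_adj.mpr adj_d
      have hx := tree_cross hT adj_b (z := q₀) (w := q) (by omega) hq1
      have hq0j' : q₀ = j' := hT.isConnected.dist_eq_zero_iff.mp (by omega)
      have hqj : j = q := hT.isConnected.dist_eq_zero_iff.mp (by omega)
      rw [hq0j', ← hqj]
      have hxa := tree_cross hT adj_a (z := p) (w := j') hp1 (by omega)
      have hxb := tree_cross hT adj_a (z := p) (w := j) hp1 hfirst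
      omega
    · -- main case : q₀ on the j-side
      have hx1 := tree_cross hT adj_b (z := i') (w := q₀) (by omega) (by omega)
      have hx2 := tree_cross hT adj_b (z := i) (w := q₀) (by omega) (by omega)
      have hSq₀ : T.dist i' q₀ + 1 = T.dist i q₀ := by omega
      have hx3 := tree_cross hT adj_a (z := p) (w := q₀) hp1 hSq₀
      omega
  -- assemble the generator dividing m
  have huv : (TreeVar.mk' (p, c) hpc) ≠ TreeVar.mk' (q, d1) hqd := by
    intro h
    exact hpq (congrArg (fun x => x.1.1) h)
  have hgen : (Finsupp.single (TreeVar.mk' (p, c) hpc) 1 +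
      Finsupp.single (TreeVar.mk' (q, d1) hqd) 1 : TreeVar n' edges →₀ ℕ)
      ∈ GenExp n' T edges :=
    ⟨p, q, c, d1, hpc, hqd, hpq, ⟨p₀, hpc0.trans Sym2.eq_swap, hG1⟩, ⟨q₀, hqd0, hG2⟩, rfl⟩
  have hle : (Finsupp.single (TreeVar.mk' (p, c) hpc) 1 +
      Finsupp.single (TreeVar.mk' (q, d1) hqd) 1 : TreeVar n' edges →₀ ℕ) ≤ μ := by
    intro w
    by_cases h1 : (TreeVar.mk' (p, c) hpc) = w
    · have h2 : (TreeVar.mk' (q, d1) hqd) ≠ w := fun hh => huv (h1.trans hh.symm)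
      rw [h1] at hμp
      simp only [Finsupp.add_apply, Finsupp.single_apply, h1, h2, if_true, if_false]
      omega
    · by_cases h2 : (TreeVar.mk' (q, d1) hqd) = w
      · rw [h2] at hμq
        simp only [Finsupp.add_apply, Finsupp.single_apply, h1, h2, if_true, if_false]
        omega
      · simp only [Finsupp.add_apply, Finsupp.single_apply, h1, h2, if_false]
        omega
  have hsum : (Finsupp.single (TreeVar.mk' (p, c) hpc) 1 +
      Finsupp.single (TreeVar.mk' (q, d1) hqd) 1 : TreeVar n' edges →₀ ℕ).sum
      (fun _ n => n) = 2 := by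
    rw [Finsupp.sum_add_index' (fun _ => rfl) (fun _ _ _ => rfl),
      Finsupp.sum_single_index rfl, Finsupp.sum_single_index rfl]
  have heq := finsupp_eq_of_le_of_sum_eq hle (by rw [hsum, hμ2])
  exact mem_treeIdeal_monomial_iff.mpr ⟨_, hgen, le_of_eq heq⟩

end
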